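/- Let t ≥ 2 be an integer, let m be an even integer with m ≥ 4(t+3)+2, let n be an integer with (t−1)(m−1) ≤ n−1 < t(m−1), and suppose p = ⌊(n−1)/t⌋ = m−2. Then R(C_m, B_n^{(3)}) ≥ n + 3p + 1; in fact, writing q = n − 1 − tp, the graph consisting of q pairwise disjoint copies of K_{p+1} together with t+3−q further copies of K_{p+1} all sharing one common vertex contains no cycle of length m and its complement contains no B_n^{(3)}. -/

import Mathlib

/-- `G` contains a cycle of length `m`. -/
def HasCycleLen {V : Type*} (G : SimpleGraph V) (m : ℕ) : Prop :=
  ∃ (v : V) (c : G.Walk v v), c.IsCycle ∧ c.length = m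

/-- `G` contains the book `B_n^{(k)}`: a clique on `k` vertices together with
`n` further vertices each adjacent to all of them. -/
def HasBook {V : Type*} (G : SimpleGraph V) (k n : ℕ) : Prop :=
  ∃ S T : Finset V, S.card = k ∧ T.card = n ∧ Disjoint S T ∧
    (∀ u ∈ S, ∀ v ∈ S, u ≠ v → G.Adj u v) ∧
    (∀ u ∈ S, ∀ v ∈ T, G.Adj u v)

/-- Every simple graph on `N` vertices contains `C_m` or its complement contains
`B_n^{(k)}`. The Ramsey number `R(C_m, B_n^{(k)})` is the least such `N`. -/
def RamseyProp (m k n N : ℕ) : Prop :=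
  ∀ G : SimpleGraph (Fin N), HasCycleLen G m ∨ HasBook Gᶜ k n

/-- The graph consisting of `q` pairwise disjoint copies of `K_{p+1}` together with
`c` further copies of `K_{p+1}` all sharing one common vertex.  The disjoint copies
live on `Fin q × Fin (p+1)`; the shared cluster lives on `Option (Fin c × Fin p)`,
where `none` is the common vertex of the `c` copies of `K_{p+1}`. -/
def disjointCliquesPlusCluster (q c p : ℕ) :
    SimpleGraph ((Fin q × Fin (p + 1)) ⊕ Option (Fin c × Fin p)) :=
  SimpleGraph.fromRel fun u v =>
    match u, v with
    | Sum.inl a, Sum.inl b => a.1 = b.1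
    | Sum.inr a, Sum.inr b => a = none ∨ a.map Prod.fst = b.map Prod.fst
    | _, _ => False

namespace Aux
open SimpleGraph

variable {q c p : ℕ}

abbrev V (q c p : ℕ) := (Fin q × Fin (p + 1)) ⊕ Option (Fin c × Fin p)

def pieceIdx : V q c p → ℕ ⊕ (ℕ ⊕ Unit)
  | Sum.inl a => Sum.inl a.1.val
  | Sum.inr none => Sum.inr (Sum.inr ())
  | Sum.inr (some z) => Sum.inr (Sum.inl z.1.val)

def proj : V q c p → ℕ
  | Sum.inl a => a.2.val
  | Sum.inr none => 0
  | Sum.inr (some z) => z.2.val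

lemma proj_lt (x : V q c p) : proj x < p + 1 := by
  rcases x with a | (_ | z)
  · exact a.2.isLt
  · simp [proj]
  · exact Nat.lt_succ_of_lt z.2.isLt

lemma proj_lt' (i : ℕ) (x : V q c p) (hx : pieceIdx x = Sum.inr (Sum.inl i)) :
    proj x < p := by
  rcases x with a | (_ | z) <;> simp_all [proj, pieceIdx]

lemma proj_injOn {κ : ℕ ⊕ (ℕ ⊕ Unit)} {x y : V q c p} (hx : pieceIdx x = κ)
    (hy : pieceIdx y = κ) (hxy : proj x = proj y) : x = y := by
  subst hy
  rcases x with ⟨a1, a2⟩ | (_ | ⟨z1, z2⟩) <;> rcases y with ⟨b1, b2⟩ | (_ | ⟨w1, w2⟩) <;>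
    simp_all [proj, pieceIdx, Prod.ext_iff, Fin.val_inj]

lemma adj_pieceIdx {u v : V q c p} (hu : u ≠ Sum.inr none) (hv : v ≠ Sum.inr none)
    (h : (disjointCliquesPlusCluster q c p).Adj u v) : pieceIdx u = pieceIdx v := by
  rw [disjointCliquesPlusCluster, SimpleGraph.fromRel_adj] at h
  rcases u with a | (_ | z) <;> rcases v with b | (_ | w) <;>
    simp_all [pieceIdx, Fin.ext_iff, Prod.ext_iff] <;> omega


lemma card_fiber (s : Finset (V q c p)) (κ : ℕ ⊕ (ℕ ⊕ Unit))
    (h : ∀ x ∈ s, pieceIdx x = κ) : s.card ≤ p + 1 := by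
  have := Finset.card_le_card_of_injOn proj
    (fun x hx => Finset.mem_range.2 (proj_lt x))
    (fun x hx y hy hxy => proj_injOn (h x hx) (h y hy) hxy)
  simpa using this

lemma card_fiber' (s : Finset (V q c p)) (i : ℕ)
    (h : ∀ x ∈ s, pieceIdx x = Sum.inr (Sum.inl i)) : s.card ≤ p := by
  have := Finset.card_le_card_of_injOn proj
    (fun x hx => Finset.mem_range.2 (proj_lt' i x (h x hx)))
    (fun x hx y hy hxy => proj_injOn (h x hx) (h y hy) hxy)
  simpa using this

lemma walk_pieceIdx {u v : V q c p} (w : (disjointCliquesPlusCluster q c p).Walk u v)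
    (hnone : Sum.inr none ∉ w.support) :
    ∀ x ∈ w.support, pieceIdx x = pieceIdx u := by
  induction w with
  | nil => intro x hx; simp_all
  | cons h w ih =>
    intro x hx
    rw [SimpleGraph.Walk.support_cons, List.mem_cons] at hx
    rw [SimpleGraph.Walk.support_cons] at hnone
    have hn1 : _ ∉ w.support := fun hh => hnone (List.mem_cons_of_mem _ hh)
    rcases hx with rfl | hx
    · rfl
    · have h1 := ih hn1 x hx
      have h2 := adj_pieceIdx (fun he => hnone (he ▸ List.mem_cons_self))
        (fun he => hn1 (he ▸ SimpleGraph.Walk.start_mem_support w)) h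
      rw [h1, ← h2]

lemma adj_none {v : V q c p} (h : (disjointCliquesPlusCluster q c p).Adj (Sum.inr none) v) :
    ∃ z, v = Sum.inr (some z) := by
  rw [disjointCliquesPlusCluster, SimpleGraph.fromRel_adj] at h
  rcases v with b | (_ | w) <;> simp_all

lemma no_cycle {m : ℕ} (hm : p + 2 ≤ m) :
    ¬ HasCycleLen (disjointCliquesPlusCluster q c p) m := by
  classical
  rintro ⟨v, w, hc, hl⟩
  obtain hn | hn := Classical.em ((Sum.inr none : V q c p) ∈ w.support)
  · -- rotate to start at none
    have hc' := hc.rotate hn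
    have hl' : (w.rotate (Sum.inr none) hn).length = m := by
      have h1 := congr_arg SimpleGraph.Walk.length (w.take_spec hn)
      rw [SimpleGraph.Walk.length_append] at h1
      rw [SimpleGraph.Walk.rotate, SimpleGraph.Walk.length_append]
      omega
    set w' := w.rotate (Sum.inr none) hn with hw'
    clear_value w'
    have hnil : ¬ w'.Nil := by
      rw [SimpleGraph.Walk.nil_iff_length_eq]; omega
    obtain ⟨x, hadj, rest, rfl⟩ := SimpleGraph.Walk.not_nil_iff.1 hnil
    have hrest_nodup : rest.support.Nodup := by
      have := hc'.support_nodup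
      simpa using this
    have hrl : rest.length + 1 = m := by simpa using hl'
    -- reverse of rest
    have hrevnodup : rest.reverse.support.Nodup := by
      rw [SimpleGraph.Walk.support_reverse]
      exact List.nodup_reverse.2 hrest_nodup
    have hnil2 : ¬ rest.reverse.Nil := by
      rw [SimpleGraph.Walk.nil_iff_length_eq, SimpleGraph.Walk.length_reverse]
      omega
    obtain ⟨y, hadj2, rest2, hr2⟩ := SimpleGraph.Walk.not_nil_iff.1 hnil2
    rw [hr2] at hrevnodup
    rw [SimpleGraph.Walk.support_cons] at hrevnodup
    have hnotin : Sum.inr none ∉ rest2.support := (List.nodup_cons.1 hrevnodup).1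
    have hnd2 : rest2.support.Nodup := (List.nodup_cons.1 hrevnodup).2
    obtain ⟨z, rfl⟩ := adj_none hadj2
    have hpc : ∀ x ∈ rest2.support, pieceIdx x = Sum.inr (Sum.inl z.1.val) :=
      fun x hx => walk_pieceIdx rest2 hnotin x hx
    have hcard : rest2.support.toFinset.card ≤ p :=
      card_fiber' _ _ (fun x hx => hpc x (List.mem_toFinset.1 hx))
    rw [List.toFinset_card_of_nodup hnd2] at hcard
    have hlen2 : rest2.support.length = rest2.length + 1 :=
      SimpleGraph.Walk.length_support rest2
    have : rest2.length + 1 = rest.length := by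
      have := congr_arg SimpleGraph.Walk.length hr2
      rw [SimpleGraph.Walk.length_reverse] at this
      simpa using this.symm
    omega
  · have htail := hc.support_nodup
    have hsub : ∀ x ∈ w.support.tail, pieceIdx x = pieceIdx v :=
      fun x hx => walk_pieceIdx w hn x (List.mem_of_mem_tail hx)
    have hcard : w.support.tail.toFinset.card ≤ p + 1 :=
      card_fiber _ _ (fun x hx => hsub x (List.mem_toFinset.1 hx))
    rw [List.toFinset_card_of_nodup htail] at hcard
    have : w.support.length = w.length + 1 := SimpleGraph.Walk.length_support w
    have : w.support.tail.length = w.length := by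
      rw [List.length_tail]; omega
    omega


open scoped Classical in
noncomputable def nb (u : V q c p) : Finset (V q c p) :=
  Finset.univ.filter (fun x => (disjointCliquesPlusCluster q c p).Adj u x ∨ x = u)

lemma mem_nb {u x : V q c p} :
    x ∈ nb u ↔ ((disjointCliquesPlusCluster q c p).Adj u x ∨ x = u) := by
  simp [nb]

lemma nb_helper {u v x : V q c p} (hux : (disjointCliquesPlusCluster q c p).Adj u x)
    (hvx : (disjointCliquesPlusCluster q c p).Adj v x)
    (huv : u ≠ v)
    (hnadj : ¬ (disjointCliquesPlusCluster q c p).Adj u v) : x = Sum.inr none := by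
  rw [disjointCliquesPlusCluster, SimpleGraph.fromRel_adj] at hux hvx hnadj
  rcases x with a | (_ | z) <;>
    rcases u with b | (_ | zu) <;> rcases v with d | (_ | zv) <;>
    simp_all [Prod.ext_iff, Fin.ext_iff] <;> omega

lemma nb_inter {u v : V q c p} (hnadj : ¬ (disjointCliquesPlusCluster q c p).Adj u v)
    (huv : u ≠ v) : nb u ∩ nb v ⊆ {Sum.inr none} := by
  intro x hx
  rw [Finset.mem_inter, mem_nb, mem_nb] at hx
  obtain ⟨hu, hv⟩ := hx
  rcases hu with hu | rfl
  · rcases hv with hv | rfl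
    · simpa using nb_helper hu hv huv hnadj
    · exact absurd hu hnadj
  · rcases hv with hv | hv
    · exact absurd hv.symm hnadj
    · exact absurd hv huv

lemma nb_block_card {u : V q c p} (i : Fin c)
    (h1 : (Sum.inr none : V q c p) ∈ nb u)
    (h2 : ∀ k : Fin p, (Sum.inr (some (i, k)) : V q c p) ∈ nb u) :
    p + 1 ≤ (nb u).card := by
  have hsub : insert (Sum.inr none : V q c p)
      (Finset.univ.image fun k : Fin p => (Sum.inr (some (i, k)) : V q c p)) ⊆ nb u := by
    intro x hx
    rw [Finset.mem_insert] at hx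
    rcases hx with rfl | hx
    · exact h1
    · simp only [Finset.mem_image, Finset.mem_univ, true_and] at hx
      obtain ⟨k, rfl⟩ := hx
      exact h2 k
  have hinj : Function.Injective fun k : Fin p => (Sum.inr (some (i, k)) : V q c p) := by
    intro k k' h
    simpa [Prod.ext_iff] using h
  have hcard : (insert (Sum.inr none : V q c p)
      (Finset.univ.image fun k : Fin p => (Sum.inr (some (i, k)) : V q c p))).card = p + 1 := by
    rw [Finset.card_insert_of_notMem (by simp), Finset.card_image_of_injective _ hinj]
    simp
  have := Finset.card_le_card hsub
  omega

lemma nb_card (hc0 : 0 < c) (u : V q c p) : p + 1 ≤ (nb u).card := by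
  rcases u with ⟨a, j⟩ | (_ | z)
  · have hsub : (Finset.univ.image fun k : Fin (p + 1) => (Sum.inl (a, k) : V q c p))
        ⊆ nb (Sum.inl (a, j)) := by
      intro x hx
      simp only [Finset.mem_image, Finset.mem_univ, true_and] at hx
      obtain ⟨k, rfl⟩ := hx
      rw [mem_nb]
      by_cases hk : k = j
      · right; rw [hk]
      · left
        rw [disjointCliquesPlusCluster, SimpleGraph.fromRel_adj]
        refine ⟨?_, Or.inl rfl⟩
        intro h
        exact hk ((Prod.ext_iff.1 (Sum.inl.inj h)).2).symm
    have hinj : Function.Injective fun k : Fin (p + 1) => (Sum.inl (a, k) : V q c p) := by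
      intro k k' h
      simpa [Prod.ext_iff] using h
    have hcard : (Finset.univ.image fun k : Fin (p + 1) => (Sum.inl (a, k) : V q c p)).card
        = p + 1 := by
      rw [Finset.card_image_of_injective _ hinj]; simp
    have := Finset.card_le_card hsub
    omega
  · -- u = inr none
    refine nb_block_card ⟨0, hc0⟩ ?_ ?_
    · rw [mem_nb]; right; rfl
    · intro k
      rw [mem_nb]; left
      rw [disjointCliquesPlusCluster, SimpleGraph.fromRel_adj]
      exact ⟨by simp, Or.inl (Or.inl rfl)⟩
  · -- u = inr (some z)
    refine nb_block_card z.1 ?_ ?_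
    · rw [mem_nb]; left
      rw [disjointCliquesPlusCluster, SimpleGraph.fromRel_adj]
      exact ⟨by simp, Or.inr (Or.inl rfl)⟩
    · intro k
      rw [mem_nb]
      by_cases hk : k = z.2
      · right; subst hk; simp
      · left
        rw [disjointCliquesPlusCluster, SimpleGraph.fromRel_adj]
        refine ⟨?_, Or.inl (Or.inr rfl)⟩
        intro h
        have := (Sum.inr.inj h)
        have := Option.some.inj this
        exact hk (congrArg Prod.snd this).symm

lemma no_book {n : ℕ} (hc0 : 0 < c)
    (hcard : Fintype.card (V q c p) = n + 3 * p) :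
    ¬ HasBook (disjointCliquesPlusCluster q c p)ᶜ 3 n := by
  rintro ⟨S, T, hS3, hTn, hdisj, hSS, hST⟩
  obtain ⟨u1, u2, u3, h12, h13, h23, rfl⟩ := Finset.card_eq_three.1 hS3
  have m1 : u1 ∈ ({u1, u2, u3} : Finset (V q c p)) := by simp
  have m2 : u2 ∈ ({u1, u2, u3} : Finset (V q c p)) := by simp
  have m3 : u3 ∈ ({u1, u2, u3} : Finset (V q c p)) := by simp
  have a12 := ((SimpleGraph.compl_adj _ _ _).1 (hSS u1 m1 u2 m2 h12)).2
  have a13 := ((SimpleGraph.compl_adj _ _ _).1 (hSS u1 m1 u3 m3 h13)).2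
  have a23 := ((SimpleGraph.compl_adj _ _ _).1 (hSS u2 m2 u3 m3 h23)).2
  set A := nb (q := q) (c := c) (p := p) u1 with hA
  set B := nb (q := q) (c := c) (p := p) u2 with hB
  set C := nb (q := q) (c := c) (p := p) u3 with hC
  have hBC : B ∩ C ⊆ {Sum.inr none} := nb_inter a23 h23
  have hAB : A ∩ B ⊆ {Sum.inr none} := nb_inter a12 h12
  have hAC : A ∩ C ⊆ {Sum.inr none} := nb_inter a13 h13
  have cBC := Finset.card_union_add_card_inter B C
  have cA := Finset.card_union_add_card_inter A (B ∪ C)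
  have cBC1 : (B ∩ C).card ≤ 1 := le_trans (Finset.card_le_card hBC) (by simp)
  have cA1 : (A ∩ (B ∪ C)).card ≤ 1 := by
    refine le_trans (Finset.card_le_card ?_) (by simp : ({Sum.inr none} : Finset (V q c p)).card ≤ 1)
    rw [Finset.inter_union_distrib_left]
    exact Finset.union_subset hAB hAC
  have cAc := nb_card (q := q) (p := p) hc0 u1
  have cBc := nb_card (q := q) (p := p) hc0 u2
  have cCc := nb_card (q := q) (p := p) hc0 u3
  rw [← hA] at cAc
  rw [← hB] at cBc
  rw [← hC] at cCc
  have hU : 3 * p + 1 ≤ (A ∪ (B ∪ C)).card := by omega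
  have hdTU : Disjoint T (A ∪ (B ∪ C)) := by
    rw [Finset.disjoint_left]
    intro x hxT hxU
    have : ∀ u ∈ ({u1, u2, u3} : Finset (V q c p)), x ∉ nb u := by
      intro u hu hxu
      have := (SimpleGraph.compl_adj _ _ _).1 (hST u hu x hxT)
      rw [mem_nb] at hxu
      rcases hxu with h | rfl
      · exact this.2 h
      · exact this.1 rfl
    rcases Finset.mem_union.1 hxU with h | h
    · exact this u1 m1 h
    · rcases Finset.mem_union.1 h with h | h
      · exact this u2 m2 h
      · exact this u3 m3 h
  have hcard2 : (T ∪ (A ∪ (B ∪ C))).card = T.card + (A ∪ (B ∪ C)).card :=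
    Finset.card_union_of_disjoint hdTU
  have hle : (T ∪ (A ∪ (B ∪ C))).card ≤ Fintype.card (V q c p) := by
    rw [← Finset.card_univ]
    exact Finset.card_le_univ _
  omega


lemma ramsey_transfer {W : Type*} [Fintype W] (G : SimpleGraph W) {m k n N : ℕ}
    (h1 : ¬ HasCycleLen G m) (h2 : ¬ HasBook Gᶜ k n) (hR : RamseyProp m k n N) :
    Fintype.card W < N := by
  by_contra hle
  push_neg at hle
  obtain ⟨f⟩ := Function.Embedding.nonempty_of_card_le
    (show Fintype.card (Fin N) ≤ Fintype.card W by simpa using hle)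
  rcases hR (G.comap f) with hcyc | hbook
  · obtain ⟨v, w, hc, hl⟩ := hcyc
    refine h1 ⟨f v, w.map (SimpleGraph.Embedding.comap f G).toHom, ?_, ?_⟩
    · exact hc.map f.injective
    · exact (SimpleGraph.Walk.length_map _ _).trans hl
  · obtain ⟨S, T, hS, hT, hd, hSS, hST⟩ := hbook
    refine h2 ⟨S.map f, T.map f, ?_, ?_, ?_, ?_, ?_⟩
    · rw [Finset.card_map]; exact hS
    · rw [Finset.card_map]; exact hT
    · rwa [Finset.disjoint_map]
    · intro u' hu' v' hv' hne
      obtain ⟨u, hu, rfl⟩ := Finset.mem_map.1 hu'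
      obtain ⟨v, hv, rfl⟩ := Finset.mem_map.1 hv'
      have huv : u ≠ v := fun h => hne (congrArg f h)
      have := (SimpleGraph.compl_adj _ _ _).1 (hSS u hu v hv huv)
      exact (SimpleGraph.compl_adj _ _ _).2 ⟨hne, fun h => this.2 h⟩
    · intro u' hu' v' hv'
      obtain ⟨u, hu, rfl⟩ := Finset.mem_map.1 hu'
      obtain ⟨v, hv, rfl⟩ := Finset.mem_map.1 hv'
      have := (SimpleGraph.compl_adj _ _ _).1 (hST u hu v hv)
      exact (SimpleGraph.compl_adj _ _ _).2 ⟨f.injective.ne this.1, fun h => this.2 h⟩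

end Aux

theorem stmt9 (t m n p : ℕ) (ht : 2 ≤ t) (hmEven : Even m)
    (hm : 4 * (t + 3) + 2 ≤ m)
    (hn1 : (t - 1) * (m - 1) ≤ n - 1) (hn2 : n - 1 < t * (m - 1))
    (hp : p = (n - 1) / t) (hpm : p = m - 2) :
    (¬ HasCycleLen
        (disjointCliquesPlusCluster (n - 1 - t * p) (t + 3 - (n - 1 - t * p)) p) m ∧
      ¬ HasBook
        (disjointCliquesPlusCluster (n - 1 - t * p) (t + 3 - (n - 1 - t * p)) p)ᶜ 3 n) ∧
    ∀ N : ℕ, RamseyProp m 3 n N → n + 3 * p + 1 ≤ N := by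
  set q := n - 1 - t * p with hqdef
  set cc := t + 3 - q with hccdef
  -- basic facts
  have hm2 : 2 ≤ m := by omega
  have hn0 : 1 ≤ n := by
    have h1 : 1 * 1 ≤ (t - 1) * (m - 1) := Nat.mul_le_mul (by omega) (by omega)
    omega
  have htp : t * p ≤ n - 1 := by
    rw [hp, mul_comm]
    exact Nat.div_mul_le_self (n - 1) t
  have hq1 : q + t * p = n - 1 := Nat.sub_add_cancel htp
  have hm1 : m - 1 = p + 1 := by omega
  have hqt : q < t := by
    have h2 : t * (m - 1) = t * p + t := by rw [hm1]; ring
    rw [h2, ← hq1] at hn2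
    linarith
  have hc0 : 0 < cc := by omega
  have hqc : q + cc = t + 3 := by omega
  have hcardV : Fintype.card (Aux.V q cc p) = n + 3 * p := by
    have hc1 : Fintype.card (Aux.V q cc p) = q * (p + 1) + (cc * p + 1) := by
      simp [Aux.V]
    rw [hc1]
    calc q * (p + 1) + (cc * p + 1) = (q + cc) * p + (q + 1) := by ring
      _ = (t + 3) * p + (q + 1) := by rw [hqc]
      _ = (q + t * p) + 1 + 3 * p := by ring
      _ = (n - 1) + 1 + 3 * p := by rw [hq1]
      _ = n + 3 * p := by omega
  have hnc : ¬ HasCycleLen (disjointCliquesPlusCluster q cc p) m :=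
    Aux.no_cycle (by omega)
  have hnb : ¬ HasBook (disjointCliquesPlusCluster q cc p)ᶜ 3 n :=
    Aux.no_book hc0 hcardV
  refine ⟨⟨hnc, hnb⟩, ?_⟩
  intro N hR
  have := Aux.ramsey_transfer (disjointCliquesPlusCluster q cc p) hnc hnb hR
  have h3 : n + 3 * p < N := by rw [← hcardV]; exact this
  omega
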